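/- Let p be a prime, n a positive integer, and k an integer with 0 ≤ k ≤ n−1. The function u_k : Z_{p^n} → Z_{p^n} defined by u_k(x) = x^k if p divides x (i.e., x lies in the ideal of Z_{p^n} generated by p) and u_k(x) = 0 otherwise, is a polynomial function. -/

import Mathlib

open scoped Classical in
theorem uk_is_poly_fun (p n k : ℕ) (hp : p.Prime) (hn : 0 < n) (hk : k ≤ n - 1) :
    ∃ g : Polynomial (ZMod (p ^ n)), ∀ x : ZMod (p ^ n),
      (if x ∈ Ideal.span {(p : ZMod (p ^ n))} then x ^ k else 0) = g.eval x := by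
  have hpn : 0 < p ^ n := pow_pos hp.pos n
  haveI : NeZero (p ^ n) := ⟨hpn.ne'⟩
  set E := (p ^ n).totient with hE
  have hEn : n ≤ E := by
    rw [hE, Nat.totient_prime_pow hp hn]
    calc n = (n - 1) + 1 := by omega
      _ ≤ 2 ^ (n - 1) := Nat.lt_two_pow_self
      _ ≤ p ^ (n - 1) := Nat.pow_le_pow_left hp.two_le _
      _ ≤ p ^ (n - 1) * (p - 1) :=
          Nat.le_mul_of_pos_right _ (Nat.sub_pos_of_lt hp.one_lt)
  refine ⟨Polynomial.X ^ k - Polynomial.X ^ (k + E), fun x => ?_⟩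
  simp only [Polynomial.eval_sub, Polynomial.eval_pow, Polynomial.eval_X]
  by_cases hx : x ∈ Ideal.span {(p : ZMod (p ^ n))}
  · rw [if_pos hx]
    rw [Ideal.mem_span_singleton] at hx
    obtain ⟨y, rfl⟩ := hx
    have hpE : ((p : ZMod (p ^ n))) ^ E = 0 := by
      have : ((p : ZMod (p ^ n))) ^ n = 0 := by
        rw [← Nat.cast_pow, ZMod.natCast_self]
      calc ((p : ZMod (p ^ n))) ^ E = ((p : ZMod (p ^ n))) ^ n * (p : ZMod (p ^ n)) ^ (E - n) := by
            rw [← pow_add, Nat.add_sub_cancel' hEn]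
        _ = 0 := by rw [this, zero_mul]
    have h0 : ((p : ZMod (p ^ n)) * y) ^ E = 0 := by
      rw [mul_pow, hpE, zero_mul]
    rw [pow_add, h0, mul_zero, sub_zero]
  · rw [if_neg hx]
    rw [Ideal.mem_span_singleton] at hx
    have hvx : ((x.val : ℕ) : ZMod (p ^ n)) = x := ZMod.natCast_rightInverse x
    have hu : IsUnit x := by
      rw [← hvx, ZMod.isUnit_iff_coprime]
      apply Nat.Coprime.pow_right
      rw [Nat.coprime_comm, hp.coprime_iff_not_dvd]
      intro hd
      exact hx (hvx ▸ (Nat.cast_dvd_cast hd : ((p : ℕ) : ZMod (p ^ n)) ∣ _))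
    obtain ⟨u, rfl⟩ := hu
    have : (u : ZMod (p ^ n)) ^ E = 1 := by
      rw [← Units.val_pow_eq_pow_val, ZMod.pow_totient u, Units.val_one]
    rw [pow_add, this, mul_one, sub_self]
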